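/- If Φ(z) = Σ_{n=0}^N d_n H_{p₀+q₁/2+n}(s z − p₁/2) with coefficients satisfying 2n(n + p₀ + q₁/2) d_n + (p₁(n−1) + p₀p₁ − q₀) d_{n−1} + (n−2+p₀) d_{n−2} = 0 for 2 ≤ n ≤ N (and the corresponding boundary relations at n = 1, N+1, N+2), and p₀ = −N, then Φ solves the biconfluent Heun equation z Φ'' + (p₀ + p₁ s z − 2 s² z²) Φ' + (q₀ s + q₁ s² z) Φ = 0. -/

import Mathlib

/-- Pochhammer symbol `(x)_k` (rising factorial). -/
noncomputable def ascp (x : ℂ) (k : ℕ) : ℂ := (ascPochhammer ℂ k).eval x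

/-- Kummer confluent hypergeometric function `₁F₁(a; b; x)`. -/
noncomputable def F11 (a b x : ℂ) : ℂ :=
  ∑' k : ℕ, ascp a k / ascp b k * x ^ k / (Nat.factorial k : ℂ)

/-- Hermite function of complex degree `ν`. -/
noncomputable def HermiteF (ν x : ℂ) : ℂ :=
  (2 : ℂ) ^ ν * (Real.sqrt Real.pi : ℂ) *
    (F11 (-ν / 2) (1 / 2) (x ^ 2) / Complex.Gamma ((1 - ν) / 2)
      - 2 * x * F11 ((1 - ν) / 2) (3 / 2) (x ^ 2) / Complex.Gamma (-ν / 2))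


noncomputable def fc (a b : ℂ) (k : ℕ) : ℂ := ascp a k / ascp b k / (Nat.factorial k : ℂ)

lemma ascp_zero (x : ℂ) : ascp x 0 = 1 := by simp [ascp]

lemma ascp_succ_right (x : ℂ) (k : ℕ) : ascp x (k+1) = ascp x k * (x + k) := by
  simp [ascp, ascPochhammer_succ_eval]

lemma ascp_succ_left (x : ℂ) (k : ℕ) : ascp x (k+1) = x * ascp (x+1) k := by
  simp [ascp, ascPochhammer_succ_left, Polynomial.eval_comp]

lemma ascp_ne_zero {b : ℂ} (hb : 0 < b.re) (k : ℕ) : ascp b k ≠ 0 := by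
  induction k with
  | zero => simp [ascp_zero]
  | succ k ih =>
      rw [ascp_succ_right]
      refine mul_ne_zero ih ?_
      intro h
      have : (b + k).re = 0 := by rw [h]; simp
      simp only [Complex.add_re, Complex.natCast_re] at this
      have : (0:ℝ) ≤ (k:ℝ) := Nat.cast_nonneg k
      nlinarith [hb]

lemma bk_ne_zero {b : ℂ} (hb : 0 < b.re) (k : ℕ) : b + (k:ℂ) ≠ 0 := by
  intro h
  have : (b + (k:ℂ)).re = 0 := by rw [h]; simp
  simp only [Complex.add_re, Complex.natCast_re] at this
  have : (0:ℝ) ≤ (k:ℝ) := Nat.cast_nonneg k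
  nlinarith [hb]

lemma fc_step (a : ℂ) {b : ℂ} (hb : 0 < b.re) (k : ℕ) :
    fc a b (k+1) = fc a b k * ((a + k) / ((b + k) * (k+1))) := by
  have h1 : ascp b k ≠ 0 := ascp_ne_zero hb k
  have h2 : b + (k:ℂ) ≠ 0 := bk_ne_zero hb k
  have h3 : ((k+1 : ℕ).factorial : ℂ) = ((k:ℂ)+1) * (k.factorial : ℂ) := by
    rw [Nat.factorial_succ]; push_cast; ring
  have h4 : (k.factorial : ℂ) ≠ 0 := Nat.cast_ne_zero.2 (Nat.factorial_ne_zero k)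
  have h5 : ((k:ℂ)+1) ≠ 0 := Nat.cast_add_one_ne_zero k
  rw [fc, fc, ascp_succ_right, ascp_succ_right, h3]
  field_simp

lemma norm_fc_step (a : ℂ) {b : ℂ} (hb : 0 < b.re) (k : ℕ) :
    ‖fc a b (k+1)‖ = ‖fc a b k‖ * (‖a + (k:ℂ)‖ / (‖b + (k:ℂ)‖ * ((k:ℝ)+1))) := by
  rw [fc_step a hb k, norm_mul, norm_div, norm_mul]
  congr 2
  have : ((k:ℂ)+1) = ((k+1:ℕ):ℂ) := by push_cast; ring
  rw [this, Complex.norm_natCast]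
  push_cast; ring

lemma eventually_bounds (a b : ℂ) (R : ℝ) :
    ∀ᶠ k : ℕ in Filter.atTop,
      (1:ℝ) ≤ (k:ℝ) ∧ ‖a‖ ≤ (k:ℝ) ∧ 2*‖b‖ ≤ (k:ℝ) ∧ 8*R ≤ (k:ℝ) := by
  have h := tendsto_natCast_atTop_atTop (R := ℝ)
  exact (((h.eventually_ge_atTop 1).and (h.eventually_ge_atTop ‖a‖)).and
    ((h.eventually_ge_atTop (2*‖b‖)).and (h.eventually_ge_atTop (8*R)))).mono
    (by tauto)

lemma norm_bounds (a b : ℂ) {hb : 0 < b.re} (k : ℕ) :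
    ‖a + (k:ℂ)‖ ≤ ‖a‖ + (k:ℝ) ∧ (k:ℝ) - ‖b‖ ≤ ‖b + (k:ℂ)‖ := by
  constructor
  · calc ‖a + (k:ℂ)‖ ≤ ‖a‖ + ‖(k:ℂ)‖ := norm_add_le _ _
      _ = ‖a‖ + (k:ℝ) := by rw [Complex.norm_natCast]
  · have := norm_sub_norm_le ((k:ℂ)) (-b)
    simp only [norm_neg, sub_neg_eq_add] at this
    calc (k:ℝ) - ‖b‖ = ‖(k:ℂ)‖ - ‖b‖ := by rw [Complex.norm_natCast]
      _ ≤ ‖(k:ℂ) + b‖ := this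
      _ = ‖b + (k:ℂ)‖ := by rw [add_comm]

lemma summable_fc (a : ℂ) {b : ℂ} (hb : 0 < b.re) (x : ℂ) :
    Summable (fun k : ℕ => fc a b k * x ^ k) := by
  apply summable_of_ratio_norm_eventually_le (r := 1/2) (by norm_num)
  filter_upwards [eventually_bounds a b ‖x‖] with k hk
  obtain ⟨hk1, hka, hkb, hkx⟩ := hk
  have hstep : fc a b (k+1) * x ^ (k+1) =
      fc a b k * x ^ k * ((a + k) / ((b + k) * ((k:ℂ)+1)) * x) := by
    rw [fc_step a hb k, pow_succ]; ring
  rw [hstep, norm_mul]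
  have hbkpos : 0 < ‖b + (k:ℂ)‖ := norm_pos_iff.2 (bk_ne_zero hb k)
  have hr : ‖(a + (k:ℂ)) / ((b + (k:ℂ)) * ((k:ℂ)+1)) * x‖ ≤ 1/2 := by
    rw [norm_mul, norm_div, norm_mul]
    have hcast : ‖(k:ℂ)+1‖ = (k:ℝ)+1 := by
      have : ((k:ℂ)+1) = ((k+1:ℕ):ℂ) := by push_cast; ring
      rw [this, Complex.norm_natCast]; push_cast; ring
    rw [hcast]
    obtain ⟨h1, h2⟩ := norm_bounds a b (hb := hb) k
    have hden : 0 < ‖b + (k:ℂ)‖ * ((k:ℝ)+1) := by positivity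
    rw [div_mul_eq_mul_div, div_le_iff₀ hden]
    have hxnn : (0:ℝ) ≤ ‖x‖ := norm_nonneg x
    have hann : (0:ℝ) ≤ ‖a + (k:ℂ)‖ := norm_nonneg _
    nlinarith [mul_le_mul_of_nonneg_right h1 hxnn,
      mul_le_mul_of_nonneg_right h2 hxnn,
      mul_le_mul_of_nonneg_left hkx (by linarith : (0:ℝ) ≤ (k:ℝ) - ‖b‖),
      mul_nonneg hxnn (Nat.cast_nonneg (α := ℝ) k)]
  calc ‖fc a b k * x ^ k‖ * ‖(a + (k:ℂ)) / ((b + (k:ℂ)) * ((k:ℂ)+1)) * x‖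
      ≤ ‖fc a b k * x ^ k‖ * (1/2) :=
        mul_le_mul_of_nonneg_left hr (norm_nonneg _)
    _ = 1/2 * ‖fc a b k * x ^ k‖ := by ring

lemma summable_v (a : ℂ) {b : ℂ} (hb : 0 < b.re) {R : ℝ} (hR : 0 ≤ R) :
    Summable (fun k : ℕ => ‖fc a b (k+1)‖ * (((k:ℝ)+1) * R^k)) := by
  apply summable_of_ratio_norm_eventually_le (r := 1/2) (by norm_num)
  filter_upwards [eventually_bounds a b R] with k hk
  obtain ⟨hk1, hka, hkb, hkR⟩ := hk
  have hbkpos : 0 < ‖b + ((k+1:ℕ):ℂ)‖ := norm_pos_iff.2 (bk_ne_zero hb (k+1))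
  have hA : ‖b + ((k+1:ℕ):ℂ)‖ ≠ 0 := ne_of_gt hbkpos
  have hn1 : ((k:ℝ)+1) ≠ 0 := by positivity
  have hn2 : ((k:ℝ)+1+1) ≠ 0 := by positivity
  have hc : ((k+1:ℕ):ℝ) = (k:ℝ)+1 := by push_cast; ring
  have hstep : ‖fc a b (k+1+1)‖ * (((k:ℝ)+1+1) * R^(k+1)) =
      (‖fc a b (k+1)‖ * (((k:ℝ)+1) * R^k)) *
        (‖a + ((k+1:ℕ):ℂ)‖ * R / (‖b + ((k+1:ℕ):ℂ)‖ * ((k:ℝ)+1))) := by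
    have key : ∀ (F A B E r c e : ℝ), B ≠ 0 → c ≠ 0 → e ≠ 0 →
        F * (A / (B * c)) * (c * (E * r)) = (F * (e * E)) * (A * r / (B * e)) := by
      intros F A B E r c e h1 h2 h3
      field_simp
    rw [norm_fc_step a hb (k+1), hc, pow_succ]
    exact key _ _ _ _ _ _ _ hA hn2 hn1
  have hfrac : ‖a + ((k+1:ℕ):ℂ)‖ * R / (‖b + ((k+1:ℕ):ℂ)‖ * ((k:ℝ)+1)) ≤ 1/2 := by
    obtain ⟨h1, h2⟩ := norm_bounds a b (hb := hb) (k+1)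
    rw [hc] at h1 h2
    have hden : 0 < ‖b + ((k+1:ℕ):ℂ)‖ * ((k:ℝ)+1) := by positivity
    rw [div_le_iff₀ hden]
    have hann : (0:ℝ) ≤ ‖a + ((k+1:ℕ):ℂ)‖ := norm_nonneg _
    nlinarith [mul_le_mul_of_nonneg_right h1 hR,
      mul_le_mul_of_nonneg_right h2 hR,
      mul_le_mul_of_nonneg_left hkR (by linarith : (0:ℝ) ≤ (k:ℝ)+1 - ‖b‖)]
  have hnn : (0:ℝ) ≤ ‖fc a b (k+1)‖ * (((k:ℝ)+1) * R^k) := by positivity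
  have hnn2 : (0:ℝ) ≤ ‖fc a b (k+1+1)‖ * (((k:ℝ)+1+1) * R^(k+1)) := by positivity
  have hmain : ‖fc a b (k+1+1)‖ * (((k:ℝ)+1+1) * R^(k+1)) ≤
      1/2 * (‖fc a b (k+1)‖ * (((k:ℝ)+1) * R^k)) := by
    rw [hstep]
    calc (‖fc a b (k+1)‖ * (((k:ℝ)+1) * R^k)) *
          (‖a + ((k+1:ℕ):ℂ)‖ * R / (‖b + ((k+1:ℕ):ℂ)‖ * ((k:ℝ)+1)))
        ≤ (‖fc a b (k+1)‖ * (((k:ℝ)+1) * R^k)) * (1/2) :=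
          mul_le_mul_of_nonneg_left hfrac hnn
      _ = 1/2 * (‖fc a b (k+1)‖ * (((k:ℝ)+1) * R^k)) := by ring
  have e1 : ‖‖fc a b (k+1+1)‖ * ((((k+1:ℕ):ℝ)+1) * R^(k+1))‖ =
      ‖fc a b (k+1+1)‖ * (((k:ℝ)+1+1) * R^(k+1)) := by
    rw [hc, Real.norm_of_nonneg hnn2]
  have e2 : ‖‖fc a b (k+1)‖ * (((k:ℝ)+1) * R^k)‖ =
      ‖fc a b (k+1)‖ * (((k:ℝ)+1) * R^k) := Real.norm_of_nonneg hnn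
  calc ‖‖fc a b (k+1+1)‖ * ((((k+1:ℕ):ℝ)+1) * R^(k+1))‖
      = ‖fc a b (k+1+1)‖ * (((k:ℝ)+1+1) * R^(k+1)) := e1
    _ ≤ 1/2 * (‖fc a b (k+1)‖ * (((k:ℝ)+1) * R^k)) := hmain
    _ = 1/2 * ‖‖fc a b (k+1)‖ * (((k:ℝ)+1) * R^k)‖ := by rw [e2]

lemma summable_u (a : ℂ) {b : ℂ} (hb : 0 < b.re) {R : ℝ} (hR : 0 ≤ R) :
    Summable (fun n : ℕ => ‖fc a b n‖ * ((n:ℝ) * R^(n-1))) := by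
  rw [← summable_nat_add_iff 1]
  have : (fun n : ℕ => ‖fc a b (n+1)‖ * (((n+1:ℕ):ℝ) * R^((n+1)-1)))
      = fun k : ℕ => ‖fc a b (k+1)‖ * (((k:ℝ)+1) * R^k) := by
    funext k; push_cast; norm_num
  rw [this]
  exact summable_v a hb hR

lemma F11_eq_tsum (a b x : ℂ) : F11 a b x = ∑' k : ℕ, fc a b k * x ^ k :=
  tsum_congr fun k => by rw [fc]; ring

lemma b_ne_zero {b : ℂ} (hb : 0 < b.re) : b ≠ 0 := by
  intro h; rw [h] at hb; simp at hb

lemma fc_deriv_coeff (a : ℂ) {b : ℂ} (hb : 0 < b.re) (k : ℕ) :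
    fc a b (k+1) * ((k:ℂ)+1) = a / b * fc (a+1) (b+1) k := by
  have hb1 : (0:ℝ) < (b+1).re := by simp [Complex.add_re]; linarith
  have h1 : ascp (b+1) k ≠ 0 := ascp_ne_zero hb1 k
  have h2 : b ≠ 0 := b_ne_zero hb
  have h3 : ((k+1 : ℕ).factorial : ℂ) = ((k:ℂ)+1) * (k.factorial : ℂ) := by
    rw [Nat.factorial_succ]; push_cast; ring
  have h4 : (k.factorial : ℂ) ≠ 0 := Nat.cast_ne_zero.2 (Nat.factorial_ne_zero k)
  have h5 : ((k:ℂ)+1) ≠ 0 := Nat.cast_add_one_ne_zero k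
  rw [fc, fc, ascp_succ_left a k, ascp_succ_left b k, h3]
  field_simp

lemma F11_hasDerivAt (a : ℂ) {b : ℂ} (hb : 0 < b.re) (x : ℂ) :
    HasDerivAt (fun y => F11 a b y) (a / b * F11 (a+1) (b+1) x) x := by
  have hRnn : (0:ℝ) ≤ ‖x‖ + 1 := by positivity
  set R : ℝ := ‖x‖ + 1 with hR
  have hball : x ∈ Metric.ball (0:ℂ) R := by
    simp [Metric.mem_ball, hR]
  have hbound : ∀ (n : ℕ) (y : ℂ), y ∈ Metric.ball (0:ℂ) R →
      ‖fc a b n * ((n:ℂ) * y ^ (n-1))‖ ≤ ‖fc a b n‖ * ((n:ℝ) * R^(n-1)) := by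
    intro n y hy
    rw [norm_mul, norm_mul, Complex.norm_natCast, norm_pow]
    have hyR : ‖y‖ ≤ R := by
      have := Metric.mem_ball.1 hy
      rw [dist_zero_right] at this
      linarith
    have : ‖y‖^(n-1) ≤ R^(n-1) := pow_le_pow_left₀ (norm_nonneg y) hyR (n-1)
    have hnn : (0:ℝ) ≤ ‖fc a b n‖ * (n:ℝ) := by positivity
    calc ‖fc a b n‖ * ((n:ℝ) * ‖y‖^(n-1)) = (‖fc a b n‖ * (n:ℝ)) * ‖y‖^(n-1) := by ring
      _ ≤ (‖fc a b n‖ * (n:ℝ)) * R^(n-1) := mul_le_mul_of_nonneg_left this hnn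
      _ = ‖fc a b n‖ * ((n:ℝ) * R^(n-1)) := by ring
  have hmain : HasDerivAt (fun y => ∑' k : ℕ, fc a b k * y ^ k)
      (∑' k : ℕ, fc a b k * ((k:ℂ) * x ^ (k-1))) x := by
    apply hasDerivAt_tsum_of_isPreconnected (summable_u a hb hRnn)
      Metric.isOpen_ball (convex_ball (0:ℂ) R).isPreconnected
      (fun n y _ => (hasDerivAt_pow n y).const_mul (fc a b n))
      hbound hball (summable_fc a hb x) hball
  have hsum_deriv : Summable (fun k : ℕ => fc a b k * ((k:ℂ) * x ^ (k-1))) :=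
    Summable.of_norm_bounded (summable_u a hb hRnn) (fun n => hbound n x hball)
  have hval : (∑' k : ℕ, fc a b k * ((k:ℂ) * x ^ (k-1))) = a / b * F11 (a+1) (b+1) x := by
    rw [Summable.tsum_eq_zero_add hsum_deriv]
    simp only [Nat.cast_zero, zero_mul, mul_zero, zero_add]
    have : ∀ k : ℕ, fc a b (k+1) * (((k+1:ℕ):ℂ) * x ^ ((k+1)-1))
        = a / b * (fc (a+1) (b+1) k * x ^ k) := by
      intro k
      have := fc_deriv_coeff a hb k
      push_cast
      calc fc a b (k+1) * (((k:ℂ)+1) * x ^ k) = (fc a b (k+1) * ((k:ℂ)+1)) * x ^ k := by ring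
        _ = (a / b * fc (a+1) (b+1) k) * x ^ k := by rw [this]
        _ = a / b * (fc (a+1) (b+1) k * x ^ k) := by ring
    rw [tsum_congr this, tsum_mul_left, ← F11_eq_tsum]
  rw [← hval]
  have hfun : (fun y => F11 a b y) = fun y => ∑' k : ℕ, fc a b k * y ^ k :=
    funext fun y => F11_eq_tsum a b y
  rw [hfun]
  exact hmain

lemma fc_zero (a b : ℂ) : fc a b 0 = 1 := by simp [fc, ascp_zero]

lemma h12re : (0:ℝ) < (1/2:ℂ).re := by norm_num
lemma h32re : (0:ℝ) < (3/2:ℂ).re := by norm_num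
lemma h52re : (0:ℝ) < (5/2:ℂ).re := by norm_num

lemma key32 (k : ℕ) : ascp (3/2) k = (1+2*(k:ℂ)) * ascp (1/2) k := by
  have e1 := ascp_succ_left (1/2) k
  have e2 := ascp_succ_right (1/2) k
  rw [show (1/2:ℂ)+1 = 3/2 by norm_num] at e1
  linear_combination 2*e2 - 2*e1

lemma key52 (k : ℕ) : ascp (5/2) k = (2/3) * ((3/2:ℂ)+(k:ℂ)) * ascp (3/2) k := by
  have e1 := ascp_succ_left (3/2) k
  have e2 := ascp_succ_right (3/2) k
  rw [show (3/2:ℂ)+1 = 5/2 by norm_num] at e1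
  linear_combination (2/3)*e2 - (2/3)*e1

lemma key_shift (a : ℂ) (k : ℕ) : a * ascp (a+1) k = ascp a k * (a + (k:ℂ)) := by
  have e1 := ascp_succ_left a k
  have e2 := ascp_succ_right a k
  linear_combination e2 - e1

lemma fact_ne (k : ℕ) : (k.factorial : ℂ) ≠ 0 := Nat.cast_ne_zero.2 (Nat.factorial_ne_zero k)

lemma fact_succ_cast (k : ℕ) : ((k+1 : ℕ).factorial : ℂ) = ((k:ℂ)+1) * (k.factorial : ℂ) := by
  rw [Nat.factorial_succ]; push_cast; ring

/-- I2 : `F(a,1/2,y) = (1-2a) F(a,3/2,y) + 2a F(a+1,3/2,y)`. -/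
lemma F11_I2 (a y : ℂ) :
    F11 a (1/2) y = (1 - 2*a) * F11 a (3/2) y + 2*a * F11 (a+1) (3/2) y := by
  have s2 := summable_fc a h32re y
  have s3 := summable_fc (a+1) h32re y
  rw [F11_eq_tsum, F11_eq_tsum, F11_eq_tsum, ← tsum_mul_left, ← tsum_mul_left,
    ← Summable.tsum_add (s2.mul_left _) (s3.mul_left _)]
  apply tsum_congr
  intro k
  have h12 : ascp (1/2) k ≠ 0 := ascp_ne_zero h12re k
  have hf := fact_ne k
  have h2k : (1+2*(k:ℂ)) ≠ 0 := by
    have := bk_ne_zero h12re k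
    intro h; apply this; linear_combination h/2
  have hs := key_shift a k
  have hcoeff : fc a (1/2) k = (1 - 2*a) * fc a (3/2) k + 2*a * fc (a+1) (3/2) k := by
    rw [fc, fc, fc, key32 k]
    field_simp
    ring_nf
    ring_nf at hs
    linear_combination (-2) * hs
  rw [hcoeff]; ring

/-- I1 : `F(a,1/2,y) - F(a-1,1/2,y) = 2 y F(a,3/2,y)`. -/
lemma F11_I1 (a y : ℂ) :
    F11 a (1/2) y - F11 (a-1) (1/2) y = 2*y*F11 a (3/2) y := by
  have s1 := summable_fc a h12re y
  have s2 := summable_fc (a-1) h12re y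
  rw [F11_eq_tsum, F11_eq_tsum, F11_eq_tsum, ← Summable.tsum_sub s1 s2, ← tsum_mul_left]
  rw [Summable.tsum_eq_zero_add (s1.sub s2)]
  simp only [fc_zero, pow_zero, mul_one, sub_self, zero_add]
  apply tsum_congr
  intro k
  have h32 : ascp (3/2) k ≠ 0 := ascp_ne_zero h32re k
  have hf := fact_ne k
  have h5 : ((k:ℂ)+1) ≠ 0 := Nat.cast_add_one_ne_zero k
  have e1 : ascp (a-1) (k+1) = (a-1) * ascp a k := by
    have := ascp_succ_left (a-1) k
    rw [show a-1+1 = a by ring] at this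
    exact this
  rw [fc, fc, fc, ascp_succ_right a k, e1, ascp_succ_left (1/2) k,
    show (1/2:ℂ)+1 = 3/2 by norm_num, fact_succ_cast k, pow_succ]
  field_simp
  ring

/-- I3 : `F(a,1/2,y) - F(a,3/2,y) = (4 a y / 3) F(a+1,5/2,y)`. -/
lemma F11_I3 (a y : ℂ) :
    F11 a (1/2) y - F11 a (3/2) y = 4*a*y/3 * F11 (a+1) (5/2) y := by
  have s1 := summable_fc a h12re y
  have s2 := summable_fc a h32re y
  rw [F11_eq_tsum, F11_eq_tsum, F11_eq_tsum, ← Summable.tsum_sub s1 s2, ← tsum_mul_left]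
  rw [Summable.tsum_eq_zero_add (s1.sub s2)]
  simp only [fc_zero, pow_zero, mul_one, sub_self, zero_add]
  apply tsum_congr
  intro k
  have h32 : ascp (3/2) k ≠ 0 := ascp_ne_zero h32re k
  have hf := fact_ne k
  have h5 : ((k:ℂ)+1) ≠ 0 := Nat.cast_add_one_ne_zero k
  have h32k : (3/2:ℂ)+(k:ℂ) ≠ 0 := bk_ne_zero h32re k
  have helper : ∀ (X T F y P u V a : ℂ), T ≠ 0 → F ≠ 0 → u ≠ 0 → V ≠ 0 →
      V = u + 1/2 →
      (a * X) / (1/2 * T) / (u * F) * (P * y) -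
        (a * X) / (3/2 * (2/3 * V * T)) / (u * F) * (P * y)
      = 4*a*y/3 * ((X / (2/3 * V * T) / F) * P) := by
    intros X T F y' P u V a' hT hF hu hV hrel
    have den1 : 1/2*T*(u*F) ≠ 0 :=
      mul_ne_zero (mul_ne_zero (by norm_num) hT) (mul_ne_zero hu hF)
    have den2 : T*u*F ≠ 0 := mul_ne_zero (mul_ne_zero hT hu) hF
    have den3 : 3/2*(2/3*V*T)*(u*F) ≠ 0 :=
      mul_ne_zero (mul_ne_zero (by norm_num)
        (mul_ne_zero (mul_ne_zero (by norm_num) hV) hT)) (mul_ne_zero hu hF)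
    have denV1 : V*(T*u*F) ≠ 0 := mul_ne_zero hV den2
    have den4 : 2/3*V*T*F ≠ 0 :=
      mul_ne_zero (mul_ne_zero (mul_ne_zero (by norm_num) hV) hT) hF
    have denV2 : V*(T*F) ≠ 0 := mul_ne_zero hV (mul_ne_zero hT hF)
    have e1 : (a' * X) / (1/2 * T) / (u * F) * (P * y') = (2*a'*X*P*y') / (T*u*F) := by
      rw [div_div, div_mul_eq_mul_div, div_eq_div_iff den1 den2]; ring
    have e2 : (a' * X) / (3/2 * (2/3 * V * T)) / (u * F) * (P * y')
        = (a'*X*P*y') / (V*(T*u*F)) := by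
      rw [div_div, div_mul_eq_mul_div, div_eq_div_iff den3 denV1]; ring
    have e3 : 4*a'*y'/3 * ((X / (2/3 * V * T) / F) * P) = (2*a'*X*P*y') / (V*(T*F)) := by
      rw [div_div, div_mul_eq_mul_div X (2/3*V*T*F) P, ← mul_div_assoc,
        div_eq_div_iff den4 denV2]
      ring
    rw [e1, e2, e3, div_sub_div _ _ den2 denV1,
      div_eq_div_iff (mul_ne_zero den2 denV1) denV2]
    linear_combination (2*a'*X*P*y'*V*T^2*u*F^2) * hrel
  have hV : (3/2:ℂ)+(k:ℂ) = ((k:ℂ)+1) + 1/2 := by ring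
  rw [fc, fc, fc, ascp_succ_left a k, ascp_succ_left (1/2) k, ascp_succ_left (3/2) k,
    show (1/2:ℂ)+1 = 3/2 by norm_num, show (3/2:ℂ)+1 = 5/2 by norm_num,
    key52 k, fact_succ_cast k, pow_succ]
  exact helper (ascp (a+1) k) (ascp (3/2) k) (k.factorial : ℂ) y (y^k)
    ((k:ℂ)+1) ((3/2:ℂ)+(k:ℂ)) a h32 hf h5 h32k hV

lemma Gamma_inv_rec (z : ℂ) : (Complex.Gamma z)⁻¹ = z * (Complex.Gamma (z+1))⁻¹ := by
  by_cases hz : z = 0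
  · simp [hz, Complex.Gamma_zero]
  · rw [Complex.Gamma_add_one z hz, mul_inv]
    by_cases hΓ : Complex.Gamma z = 0
    · simp [hΓ]
    · field_simp

lemma div_Gamma_rec (w z : ℂ) : w / Complex.Gamma z = w * z / Complex.Gamma (z+1) := by
  rw [div_eq_mul_inv, div_eq_mul_inv, Gamma_inv_rec z]; ring

/-- Three-term recurrence for the Hermite function. -/
lemma hermite_rec (ν x : ℂ) :
    HermiteF (ν+1) x = 2*x*HermiteF ν x - 2*ν*HermiteF (ν-1) x := by
  have hI1' : F11 ((1-ν)/2-1) (1/2) (x^2)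
      = F11 ((1-ν)/2) (1/2) (x^2) - 2*x^2*F11 ((1-ν)/2) (3/2) (x^2) := by
    linear_combination -F11_I1 ((1-ν)/2) (x^2)
  have hI2' : F11 (-ν/2) (1/2) (x^2)
      = (1-2*(-ν/2))*F11 (-ν/2) (3/2) (x^2) + 2*(-ν/2)*F11 (-ν/2+1) (3/2) (x^2) :=
    F11_I2 (-ν/2) (x^2)
  simp only [HermiteF]
  rw [show -(ν+1)/2 = (1-ν)/2-1 by ring, show (1-(ν+1))/2 = -ν/2 by ring,
    show -(ν-1)/2 = (1-ν)/2 by ring, show (1-(ν-1))/2 = -ν/2+1 by ring]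
  rw [hI1', hI2']
  rw [div_Gamma_rec (F11 ((1-ν)/2) (1/2) (x^2) - 2*x^2*F11 ((1-ν)/2) (3/2) (x^2)) (-ν/2)]
  rw [div_Gamma_rec (2 * x * F11 (-ν/2) (3/2) (x^2)) ((1-ν)/2-1)]
  rw [div_Gamma_rec (2 * x * F11 ((1-ν)/2) (3/2) (x^2)) (-ν/2)]
  rw [show (1-ν)/2-1+1 = (1-ν)/2 by ring]
  rw [Complex.cpow_add ν 1 (by norm_num : (2:ℂ) ≠ 0),
    Complex.cpow_sub ν 1 (by norm_num : (2:ℂ) ≠ 0), Complex.cpow_one]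
  ring

/-- Derivative of the Hermite function: `H_ν' = 2 ν H_{ν-1}`. -/
lemma hermite_hasDerivAt (ν x : ℂ) :
    HasDerivAt (HermiteF ν) (2*ν*HermiteF (ν-1) x) x := by
  have hx2 : HasDerivAt (fun t : ℂ => t^2) (2*x) x := by
    simpa using hasDerivAt_pow 2 x
  have h1 : HasDerivAt (fun t : ℂ => F11 (-ν/2) (1/2) (t^2))
      ((-ν/2)/(1/2) * F11 (-ν/2+1) (1/2+1) (x^2) * (2*x)) x := by
    simpa [Function.comp_def] using (F11_hasDerivAt (-ν/2) h12re (x^2)).comp x hx2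
  have h2 : HasDerivAt (fun t : ℂ => F11 ((1-ν)/2) (3/2) (t^2))
      (((1-ν)/2)/(3/2) * F11 ((1-ν)/2+1) (3/2+1) (x^2) * (2*x)) x := by
    simpa [Function.comp_def] using (F11_hasDerivAt ((1-ν)/2) h32re (x^2)).comp x hx2
  have h2t : HasDerivAt (fun t : ℂ => 2*t) 2 x := by
    simpa using (hasDerivAt_id x).const_mul (2:ℂ)
  have hbuilt : HasDerivAt
      (fun t : ℂ => (2:ℂ)^ν * (Real.sqrt Real.pi : ℂ) *
        (F11 (-ν/2) (1/2) (t^2) / Complex.Gamma ((1-ν)/2)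
          - 2 * t * F11 ((1-ν)/2) (3/2) (t^2) / Complex.Gamma (-ν/2)))
      ((2:ℂ)^ν * (Real.sqrt Real.pi : ℂ) *
        (((-ν/2)/(1/2) * F11 (-ν/2+1) (1/2+1) (x^2) * (2*x)) / Complex.Gamma ((1-ν)/2)
          - (2 * F11 ((1-ν)/2) (3/2) (x^2)
             + 2*x*(((1-ν)/2)/(3/2) * F11 ((1-ν)/2+1) (3/2+1) (x^2) * (2*x)))
            / Complex.Gamma (-ν/2))) x := by
    exact ((h1.div_const _).sub ((h2t.mul h2).div_const _)).const_mul _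
  have hfun : (fun t : ℂ => (2:ℂ)^ν * (Real.sqrt Real.pi : ℂ) *
        (F11 (-ν/2) (1/2) (t^2) / Complex.Gamma ((1-ν)/2)
          - 2 * t * F11 ((1-ν)/2) (3/2) (t^2) / Complex.Gamma (-ν/2))) = HermiteF ν := by
    funext t; simp only [HermiteF]
  rw [hfun] at hbuilt
  have hval : (2:ℂ)^ν * (Real.sqrt Real.pi : ℂ) *
        (((-ν/2)/(1/2) * F11 (-ν/2+1) (1/2+1) (x^2) * (2*x)) / Complex.Gamma ((1-ν)/2)
          - (2 * F11 ((1-ν)/2) (3/2) (x^2)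
             + 2*x*(((1-ν)/2)/(3/2) * F11 ((1-ν)/2+1) (3/2+1) (x^2) * (2*x)))
            / Complex.Gamma (-ν/2))
      = 2*ν*HermiteF (ν-1) x := by
    have hI3' : F11 ((1-ν)/2) (1/2) (x^2)
        = F11 ((1-ν)/2) (3/2) (x^2) + 4*((1-ν)/2)*x^2/3 * F11 ((1-ν)/2+1) (5/2) (x^2) := by
      linear_combination F11_I3 ((1-ν)/2) (x^2)
    simp only [HermiteF]
    rw [show -(ν-1)/2 = (1-ν)/2 by ring, show (1-(ν-1))/2 = -ν/2+1 by ring]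
    rw [hI3']
    rw [div_Gamma_rec (2 * F11 ((1-ν)/2) (3/2) (x^2)
             + 2*x*(((1-ν)/2)/(3/2) * F11 ((1-ν)/2+1) (3/2+1) (x^2) * (2*x))) (-ν/2)]
    rw [Complex.cpow_sub ν 1 (by norm_num : (2:ℂ) ≠ 0), Complex.cpow_one]
    rw [show (1/2:ℂ)+1 = 3/2 by norm_num, show (3/2:ℂ)+1 = 5/2 by norm_num]
    ring
  rw [hval] at hbuilt
  exact hbuilt

lemma bhe_term (p₀ p₁ q₀ q₁ μ x : ℂ) :
    (x + p₁/2) * (4*μ*(μ-1) * HermiteF (μ-1-1) x)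
      + (p₀ + p₁*(x+p₁/2) - 2*(x+p₁/2)^2) * (2*μ*HermiteF (μ-1) x)
      + (q₀ + q₁*(x+p₁/2)) * HermiteF μ x
    = (q₁/2-μ)*HermiteF (μ+1) x + (q₀+q₁*p₁/2-μ*p₁)*HermiteF μ x
      - 2*μ*(μ-p₀-q₁/2)*HermiteF (μ-1) x := by
  have h3 : HermiteF (μ+1) x = 2*x*HermiteF μ x - 2*μ*HermiteF (μ-1) x := hermite_rec μ x
  have h2 : HermiteF μ x = 2*x*HermiteF (μ-1) x - 2*(μ-1)*HermiteF (μ-1-1) x := by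
    have := hermite_rec (μ-1) x
    rw [show μ-1+1 = μ by ring] at this; exact this
  have h1 : HermiteF (μ-1) x = 2*x*HermiteF (μ-1-1) x - 2*(μ-1-1)*HermiteF (μ-1-1-1) x := by
    have := hermite_rec (μ-1-1) x
    rw [show μ-1-1+1 = μ-1 by ring] at this; exact this
  rw [h3, h2, h1]; ring

/-- a terminated Hermite-function series with `p₀ = −N` and coefficients
obeying the recurrence (14) and the boundary relations solves the biconfluent Heun equation. -/
theorem bhe_hermite_sum_solution (N : ℕ) (hN : 1 ≤ N) (p₀ p₁ q₀ q₁ s : ℂ) (hs : s ≠ 0)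
    (hp₀ : p₀ = -(N : ℂ)) (d : ℕ → ℂ)
    (hrec : ∀ n : ℕ, 2 ≤ n → n ≤ N →
      2 * (n : ℂ) * ((n : ℂ) + p₀ + q₁ / 2) * d n
        + (p₁ * ((n : ℂ) - 1) + p₀ * p₁ - q₀) * d (n - 1)
        + ((n : ℂ) - 2 + p₀) * d (n - 2) = 0)
    (hb1 : 2 * (1 + p₀ + q₁ / 2) * d 1 + (p₀ * p₁ - q₀) * d 0 = 0)
    (hbN1 : (p₁ * (N : ℂ) + p₀ * p₁ - q₀) * d N + ((N : ℂ) - 1 + p₀) * d (N - 1) = 0)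
    (Φ : ℂ → ℂ)
    (hΦ : Φ = fun z =>
      ∑ n ∈ Finset.range (N + 1), d n * HermiteF (p₀ + q₁ / 2 + n) (s * z - p₁ / 2)) :
    ∀ z : ℂ, z * deriv (deriv Φ) z + (p₀ + p₁ * s * z - 2 * s ^ 2 * z ^ 2) * deriv Φ z
      + (q₀ * s + q₁ * s ^ 2 * z) * Φ z = 0 := by
  obtain ⟨M, rfl⟩ : ∃ M, N = M + 1 := ⟨N-1, (Nat.succ_pred_eq_of_pos hN).symm⟩
  intro z
  have hterm1 : ∀ (μ : ℂ) (z : ℂ), HasDerivAt (fun z : ℂ => HermiteF μ (s*z - p₁/2))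
      (2*μ*HermiteF (μ-1) (s*z - p₁/2) * s) z := by
    intro μ z
    have hw : HasDerivAt (fun z : ℂ => s*z - p₁/2) s z := by
      simpa using ((hasDerivAt_id z).const_mul s).sub_const (p₁/2)
    simpa [Function.comp_def] using (hermite_hasDerivAt μ (s*z - p₁/2)).comp z hw
  have hΦ' : ∀ z : ℂ, HasDerivAt Φ
      (∑ n ∈ Finset.range (M+1+1),
        d n * (2*(p₀+q₁/2+(n:ℂ))*HermiteF (p₀+q₁/2+(n:ℂ)-1) (s*z-p₁/2) * s)) z := by
    intro z
    rw [hΦ]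
    exact HasDerivAt.fun_sum (fun (n : ℕ) _ => (hterm1 (p₀+q₁/2+(n:ℂ)) z).const_mul (d n))
  have hD1 : deriv Φ = fun z : ℂ => ∑ n ∈ Finset.range (M+1+1),
      d n * (2*(p₀+q₁/2+(n:ℂ))*HermiteF (p₀+q₁/2+(n:ℂ)-1) (s*z-p₁/2) * s) :=
    funext fun z => (hΦ' z).deriv
  have hΦ'' : ∀ z : ℂ, HasDerivAt (deriv Φ)
      (∑ n ∈ Finset.range (M+1+1),
        d n * (2*(p₀+q₁/2+(n:ℂ)) *
          (2*(p₀+q₁/2+(n:ℂ)-1)*HermiteF (p₀+q₁/2+(n:ℂ)-1-1) (s*z-p₁/2) * s) * s)) z := by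
    intro z
    rw [hD1]
    exact HasDerivAt.fun_sum (fun (n : ℕ) _ =>
      (((hterm1 (p₀+q₁/2+(n:ℂ)-1) z).const_mul (2*(p₀+q₁/2+(n:ℂ)))).mul_const s).const_mul (d n))
  have e2 : deriv (deriv Φ) z = ∑ n ∈ Finset.range (M+1+1),
      d n * (2*(p₀+q₁/2+(n:ℂ)) *
        (2*(p₀+q₁/2+(n:ℂ)-1)*HermiteF (p₀+q₁/2+(n:ℂ)-1-1) (s*z-p₁/2) * s) * s) :=
    (hΦ'' z).deriv
  have e1 : deriv Φ z = ∑ n ∈ Finset.range (M+1+1),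
      d n * (2*(p₀+q₁/2+(n:ℂ))*HermiteF (p₀+q₁/2+(n:ℂ)-1) (s*z-p₁/2) * s) :=
    (hΦ' z).deriv
  rw [e2, e1]
  simp only [hΦ]
  rw [Finset.mul_sum, Finset.mul_sum, Finset.mul_sum, ← Finset.sum_add_distrib,
    ← Finset.sum_add_distrib]
  have hsplit : ∀ n ∈ Finset.range (M+1+1),
      z * (d n * (2*(p₀+q₁/2+(n:ℂ)) *
          (2*(p₀+q₁/2+(n:ℂ)-1)*HermiteF (p₀+q₁/2+(n:ℂ)-1-1) (s*z-p₁/2) * s) * s))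
      + (p₀+p₁*s*z-2*s^2*z^2) *
          (d n * (2*(p₀+q₁/2+(n:ℂ))*HermiteF (p₀+q₁/2+(n:ℂ)-1) (s*z-p₁/2) * s))
      + (q₀*s+q₁*s^2*z) * (d n * HermiteF (p₀+q₁/2+(n:ℂ)) (s*z-p₁/2))
      = d n * s * (q₁/2-(p₀+q₁/2+(n:ℂ))) * HermiteF (p₀+q₁/2+(n:ℂ)+1) (s*z-p₁/2)
        + d n * s * (q₀+q₁*p₁/2-(p₀+q₁/2+(n:ℂ))*p₁) * HermiteF (p₀+q₁/2+(n:ℂ)) (s*z-p₁/2)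
        + d n * s * (-2*(p₀+q₁/2+(n:ℂ))*((p₀+q₁/2+(n:ℂ))-p₀-q₁/2)) *
            HermiteF (p₀+q₁/2+(n:ℂ)-1) (s*z-p₁/2) := by
    intro n _
    linear_combination (d n * s) * bhe_term p₀ p₁ q₀ q₁ (p₀+q₁/2+(n:ℂ)) (s*z-p₁/2)
  rw [Finset.sum_congr rfl hsplit]
  rw [Finset.sum_add_distrib, Finset.sum_add_distrib]
  rw [Finset.sum_range_succ, Finset.sum_range_succ]
  rw [Finset.sum_range_succ' (fun n => d n * s * (q₀+q₁*p₁/2-(p₀+q₁/2+(n:ℂ))*p₁) *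
        HermiteF (p₀+q₁/2+(n:ℂ)) (s*z-p₁/2)) (M+1)]
  rw [Finset.sum_range_succ (fun k => d (k+1) * s * (q₀+q₁*p₁/2-(p₀+q₁/2+((k+1:ℕ):ℂ))*p₁) *
        HermiteF (p₀+q₁/2+((k+1:ℕ):ℂ)) (s*z-p₁/2)) M]
  rw [Finset.sum_range_succ' (fun n => d n * s * (-2*(p₀+q₁/2+(n:ℂ))*((p₀+q₁/2+(n:ℂ))-p₀-q₁/2)) *
        HermiteF (p₀+q₁/2+(n:ℂ)-1) (s*z-p₁/2)) (M+1)]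
  rw [Finset.sum_range_succ' (fun k => d (k+1) * s *
        (-2*(p₀+q₁/2+((k+1:ℕ):ℂ))*((p₀+q₁/2+((k+1:ℕ):ℂ))-p₀-q₁/2)) *
        HermiteF (p₀+q₁/2+((k+1:ℕ):ℂ)-1) (s*z-p₁/2)) M]
  have hmain :
      (∑ x ∈ Finset.range M, d x * s * (q₁/2-(p₀+q₁/2+(x:ℂ))) *
          HermiteF (p₀+q₁/2+(x:ℂ)+1) (s*z-p₁/2))
      + (∑ x ∈ Finset.range M, d (x+1) * s * (q₀+q₁*p₁/2-(p₀+q₁/2+((x+1:ℕ):ℂ))*p₁) *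
          HermiteF (p₀+q₁/2+((x+1:ℕ):ℂ)) (s*z-p₁/2))
      + (∑ k ∈ Finset.range M, d (k+1+1) * s *
          (-2*(p₀+q₁/2+((k+1+1:ℕ):ℂ))*((p₀+q₁/2+((k+1+1:ℕ):ℂ))-p₀-q₁/2)) *
          HermiteF (p₀+q₁/2+((k+1+1:ℕ):ℂ)-1) (s*z-p₁/2)) = 0 := by
    rw [← Finset.sum_add_distrib, ← Finset.sum_add_distrib]
    apply Finset.sum_eq_zero
    intro k hk
    have hkM : k < M := Finset.mem_range.1 hk
    have hr := hrec (k+1+1) (by omega) (by omega)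
    have i1 : k+1+1-1 = k+1 := by omega
    have i2 : k+1+1-2 = k := by omega
    rw [i1, i2] at hr
    push_cast at hr
    rw [show ((k+1:ℕ):ℂ) = (k:ℂ)+1 by push_cast; ring,
        show ((k+1+1:ℕ):ℂ) = (k:ℂ)+1+1 by push_cast; ring]
    rw [show p₀+q₁/2+((k:ℂ)+1) = p₀+q₁/2+(k:ℂ)+1 by ring,
        show p₀+q₁/2+((k:ℂ)+1+1)-1 = p₀+q₁/2+(k:ℂ)+1 by ring]
    linear_combination (-(s * HermiteF (p₀+q₁/2+(k:ℂ)+1) (s*z-p₁/2))) * hr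
  have hz1 : d (M+1) * s * (q₁/2-(p₀+q₁/2+((M+1:ℕ):ℂ))) *
      HermiteF (p₀+q₁/2+((M+1:ℕ):ℂ)+1) (s*z-p₁/2) = 0 := by
    linear_combination (-(d (M+1) * s *
      HermiteF (p₀+q₁/2+((M+1:ℕ):ℂ)+1) (s*z-p₁/2))) * hp₀
  have hz2 : d M * s * (q₁/2-(p₀+q₁/2+(M:ℂ))) * HermiteF (p₀+q₁/2+(M:ℂ)+1) (s*z-p₁/2)
      + d (M+1) * s * (q₀+q₁*p₁/2-(p₀+q₁/2+((M+1:ℕ):ℂ))*p₁) *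
          HermiteF (p₀+q₁/2+((M+1:ℕ):ℂ)) (s*z-p₁/2) = 0 := by
    have hb := hbN1
    have i3 : M+1-1 = M := by omega
    rw [i3] at hb
    push_cast at hb
    rw [show ((M+1:ℕ):ℂ) = (M:ℂ)+1 by push_cast; ring]
    rw [show p₀+q₁/2+((M:ℂ)+1) = p₀+q₁/2+(M:ℂ)+1 by ring]
    linear_combination (-(s * HermiteF (p₀+q₁/2+(M:ℂ)+1) (s*z-p₁/2))) * hb
  have hz3 : d 0 * s * (q₀+q₁*p₁/2-(p₀+q₁/2+((0:ℕ):ℂ))*p₁) *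
        HermiteF (p₀+q₁/2+((0:ℕ):ℂ)) (s*z-p₁/2)
      + d (0+1) * s * (-2*(p₀+q₁/2+((0+1:ℕ):ℂ))*((p₀+q₁/2+((0+1:ℕ):ℂ))-p₀-q₁/2)) *
          HermiteF (p₀+q₁/2+((0+1:ℕ):ℂ)-1) (s*z-p₁/2) = 0 := by
    rw [show ((0:ℕ):ℂ) = 0 by norm_num, show ((0+1:ℕ):ℂ) = 1 by norm_num,
        show (0+1 : ℕ) = 1 from rfl,
        show p₀+q₁/2+(0:ℂ) = p₀+q₁/2 by ring, show p₀+q₁/2+(1:ℂ)-1 = p₀+q₁/2 by ring]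
    linear_combination (-(s * HermiteF (p₀+q₁/2) (s*z-p₁/2))) * hb1
  have hz4 : d 0 * s * (-2*(p₀+q₁/2+((0:ℕ):ℂ))*((p₀+q₁/2+((0:ℕ):ℂ))-p₀-q₁/2)) *
      HermiteF (p₀+q₁/2+((0:ℕ):ℂ)-1) (s*z-p₁/2) = 0 := by
    push_cast
    ring
  linear_combination hmain + hz1 + hz2 + hz3 + hz4
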